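/- For every α ∈ [1,∞) and every η ∈ (0,1) with η ≠ 1/2, the conditional risk f ↦ η·l̃^α(f) + (1-η)·l̃^α(-f) has a unique global minimizer over ℝ, given by f*(α,η) = α·log(η/(1-η)). In particular, sign(f*(α,η)) = sign(2η - 1). -/

import Mathlib

/-- The sigmoid function `σ(z) = 1/(1+e^{-z})`. -/
noncomputable def sigmoid (z : ℝ) : ℝ := 1 / (1 + Real.exp (-z))

/-- The margin `α`-loss for finite `α ∈ [1,∞)`:
`l̃^1(z) = -log σ(z)` and `l̃^α(z) = (α/(α-1))·(1 - σ(z)^{1-1/α})` for `α > 1`. -/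
noncomputable def margAlphaLoss (α : ℝ) (z : ℝ) : ℝ :=
  if α = 1 then -Real.log (sigmoid z)
  else (α / (α - 1)) * (1 - sigmoid z ^ (1 - 1/α))

lemma sigmoid_pos (z : ℝ) : 0 < sigmoid z := by unfold sigmoid; positivity

lemma exp_mul_exp_neg (z : ℝ) : Real.exp (-z) * Real.exp z = 1 := by
  rw [← Real.exp_add]; simp

lemma one_sub_sigmoid (z : ℝ) : 1 - sigmoid z = sigmoid (-z) := by
  unfold sigmoid
  rw [neg_neg]
  have h1 : (1 + Real.exp (-z)) ≠ 0 := by positivity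
  have h2 : (1 + Real.exp z) ≠ 0 := by positivity
  field_simp
  nlinarith [exp_mul_exp_neg z]

lemma sigmoid_eq_exp_mul (z : ℝ) : sigmoid z = Real.exp z * sigmoid (-z) := by
  unfold sigmoid
  rw [neg_neg]
  have h1 : (1 + Real.exp (-z)) ≠ 0 := by positivity
  have h2 : (1 + Real.exp z) ≠ 0 := by positivity
  field_simp
  nlinarith [exp_mul_exp_neg z]

lemma hasDerivAt_sigmoid (z : ℝ) :
    HasDerivAt sigmoid (sigmoid z * (1 - sigmoid z)) z := by
  have h : HasDerivAt (fun z : ℝ => 1 + Real.exp (-z)) (-Real.exp (-z)) z := by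
    simpa using (((Real.hasDerivAt_exp (-z)).comp z (hasDerivAt_neg z)).const_add 1)
  have h2 := h.inv (by positivity)
  have hs : sigmoid = fun z : ℝ => (1 + Real.exp (-z))⁻¹ := by
    funext w; simp [sigmoid, one_div]
  rw [hs]
  refine h2.congr_deriv (Eq.symm ?_)
  simp only []
  have h1 : (1 + Real.exp (-z)) ≠ 0 := by positivity
  field_simp
  ring

lemma hasDerivAt_loss_one (z : ℝ) :
    HasDerivAt (margAlphaLoss 1) (sigmoid z - 1) z := by
  have hL : margAlphaLoss 1 = fun z => -Real.log (sigmoid z) := by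
    funext w; simp [margAlphaLoss]
  rw [hL]
  have h := ((hasDerivAt_sigmoid z).log (sigmoid_pos z).ne').neg
  refine h.congr_deriv (Eq.symm ?_)
  have := (sigmoid_pos z).ne'
  field_simp
  ring

lemma hasDerivAt_loss_gt (α : ℝ) (hα : 1 < α) (z : ℝ) :
    HasDerivAt (margAlphaLoss α) (-(sigmoid z ^ (1 - 1/α) * sigmoid (-z))) z := by
  have hα0 : α ≠ 0 := by linarith
  have hα1 : α - 1 ≠ 0 := by linarith
  have hne : α ≠ 1 := by linarith
  have hL : margAlphaLoss α = fun z => (α / (α - 1)) * (1 - sigmoid z ^ (1 - 1/α)) := by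
    funext w; simp [margAlphaLoss, hne]
  rw [hL]
  have hr := (hasDerivAt_sigmoid z).rpow_const (p := 1 - 1/α) (Or.inl (sigmoid_pos z).ne')
  have h := ((hr.const_sub 1).const_mul (α / (α - 1)))
  refine h.congr_deriv (Eq.symm ?_)
  -- show -(σ^(1-1/α) * σ(-z)) = α/(α-1) * (-( (1-1/α) * σ^(1-1/α-1) * (σ*(1-σ)) ))
  rw [one_sub_sigmoid z] at *
  have hpow : sigmoid z ^ (1 - 1/α - 1) * sigmoid z = sigmoid z ^ (1 - 1/α) := by
    rw [← Real.rpow_add_one (sigmoid_pos z).ne']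
    ring_nf
  have hc : α / (α - 1) * (1 - 1/α) = 1 := by field_simp
  rw [show α / (α - 1) * -(sigmoid z * sigmoid (-z) * (1 - 1/α) * sigmoid z ^ (1 - 1/α - 1))
      = -((α/(α-1)*(1-1/α)) * (sigmoid z ^ (1-1/α-1) * sigmoid z) * sigmoid (-z)) from by ring,
    hc, hpow]
  ring

lemma key (α : ℝ) (hα : 1 ≤ α) (η : ℝ) (hη0 : 0 < η) (hη1 : η < 1) :
    ∃ g : ℝ → ℝ,
      (∀ f : ℝ, HasDerivAt
          (fun f => η * margAlphaLoss α f + (1 - η) * margAlphaLoss α (-f)) (g f) f) ∧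
      (∀ f : ℝ, α * Real.log (η / (1 - η)) < f → 0 < g f) ∧
      (∀ f : ℝ, f < α * Real.log (η / (1 - η)) → g f < 0) := by
  have h1η : 0 < 1 - η := by linarith
  have hq : (0:ℝ) < η / (1 - η) := by positivity
  have hexp_t : Real.exp (Real.log (η / (1 - η))) = η / (1 - η) := Real.exp_log hq
  set t := Real.log (η / (1 - η)) with ht
  rcases eq_or_lt_of_le hα with hα1 | hαgt
  · -- α = 1
    subst hα1
    refine ⟨fun f => sigmoid f - η, fun f => ?_, fun f hf => ?_, fun f hf => ?_⟩
    · have h1 := (hasDerivAt_loss_one f).const_mul η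
      have h2 := ((hasDerivAt_loss_one (-f)).comp f (hasDerivAt_neg f)).const_mul (1 - η)
      have h := h1.add h2
      refine h.congr_deriv (Eq.symm ?_)
      have hs : sigmoid (-f) = 1 - sigmoid f := (one_sub_sigmoid f).symm
      simp only [Function.comp]
      rw [hs]; ring
    · -- 1 * t < f ⇒ 0 < σ f - η
      rw [one_mul] at hf
      have h1 : Real.exp (-f) < Real.exp (-t) := by
        apply Real.exp_lt_exp.2; linarith
      have h2 : Real.exp (-t) = (1 - η) / η := by
        rw [Real.exp_neg, hexp_t, inv_div]
      have h3 : Real.exp (-f) < (1 - η) / η := by rw [← h2]; exact h1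
      have h4 : η * Real.exp (-f) < 1 - η := by
        rw [div_eq_mul_inv] at h3
        calc η * Real.exp (-f) < η * ((1 - η) * η⁻¹) := by
              exact mul_lt_mul_of_pos_left h3 hη0
          _ = 1 - η := by field_simp
      have hd : (0:ℝ) < 1 + Real.exp (-f) := by positivity
      have : η < 1 / (1 + Real.exp (-f)) := by
        rw [lt_div_iff₀ hd]; nlinarith
      unfold sigmoid; linarith
    · rw [one_mul] at hf
      have h1 : Real.exp (-t) < Real.exp (-f) := by
        apply Real.exp_lt_exp.2; linarith
      have h2 : Real.exp (-t) = (1 - η) / η := by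
        rw [Real.exp_neg, hexp_t, inv_div]
      have h3 : (1 - η) / η < Real.exp (-f) := by rw [← h2]; exact h1
      have h4 : 1 - η < η * Real.exp (-f) := by
        rw [div_lt_iff₀ hη0] at h3; nlinarith
      have hd : (0:ℝ) < 1 + Real.exp (-f) := by positivity
      have : 1 / (1 + Real.exp (-f)) < η := by
        rw [div_lt_iff₀ hd]; nlinarith
      unfold sigmoid; linarith
  · -- α > 1
    have hαpos : (0:ℝ) < α := by linarith
    set p : ℝ := 1 - 1/α with hp
    refine ⟨fun f => sigmoid (-f) ^ p * sigmoid (-f) * Real.exp (f * p)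
        * ((1 - η) * Real.exp (f * (1/α)) - η), fun f => ?_, fun f hf => ?_, fun f hf => ?_⟩
    · have h1 := (hasDerivAt_loss_gt α hαgt f).const_mul η
      have h2 := ((hasDerivAt_loss_gt α hαgt (-f)).comp f (hasDerivAt_neg f)).const_mul (1 - η)
      have h := h1.add h2
      refine h.congr_deriv (Eq.symm ?_)
      simp only [Function.comp, neg_neg]
      -- goal: B * (...) = η * (-(σf^p σ(-f))) + (1-η)*((-(σ(-f)^p * σ f)) * (-1))
      have hsf : sigmoid f = Real.exp f * sigmoid (-f) := sigmoid_eq_exp_mul f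
      have hsp : sigmoid f ^ p = Real.exp (f * p) * sigmoid (-f) ^ p := by
        rw [hsf, Real.mul_rpow (Real.exp_pos f).le (sigmoid_pos (-f)).le, ← Real.exp_mul]
      have hef : Real.exp f = Real.exp (f * p) * Real.exp (f * (1/α)) := by
        rw [← Real.exp_add]
        congr 1
        simp only [hp]
        field_simp
        ring
      rw [hsp, hsf, hef]; ring
    · have hB : 0 < sigmoid (-f) ^ p * sigmoid (-f) * Real.exp (f * p) :=
        mul_pos (mul_pos (Real.rpow_pos_of_pos (sigmoid_pos (-f)) p) (sigmoid_pos (-f)))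
          (Real.exp_pos _)
      have hfa : t < f * (1/α) := by
        rw [mul_one_div, lt_div_iff₀ hαpos]
        linarith [mul_comm t α]
      have : η / (1 - η) < Real.exp (f * (1/α)) := by
        rw [← hexp_t]; exact Real.exp_lt_exp.2 hfa
      have hpos : 0 < (1 - η) * Real.exp (f * (1/α)) - η := by
        have := mul_lt_mul_of_pos_left this h1η
        rw [mul_div_cancel₀] at this
        · linarith
        · exact h1η.ne'
      exact mul_pos hB hpos
    · have hB : 0 < sigmoid (-f) ^ p * sigmoid (-f) * Real.exp (f * p) :=
        mul_pos (mul_pos (Real.rpow_pos_of_pos (sigmoid_pos (-f)) p) (sigmoid_pos (-f)))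
          (Real.exp_pos _)
      have hfa : f * (1/α) < t := by
        rw [mul_one_div, div_lt_iff₀ hαpos]
        linarith [mul_comm t α]
      have hlt : Real.exp (f * (1/α)) < η / (1 - η) := by
        rw [← hexp_t]; exact Real.exp_lt_exp.2 hfa
      have hneg : (1 - η) * Real.exp (f * (1/α)) - η < 0 := by
        have := mul_lt_mul_of_pos_left hlt h1η
        rw [mul_div_cancel₀] at this
        · linarith
        · exact h1η.ne'
      exact mul_neg_of_pos_of_neg hB hneg

/-- For every `α ∈ [1,∞)` and `η ∈ (0,1)` with `η ≠ 1/2`, the conditional risk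
`f ↦ η·l̃^α(f) + (1-η)·l̃^α(-f)` has the unique global minimizer
`f*(α,η) = α·log(η/(1-η))` over `ℝ`; in particular `sign f* = sign (2η-1)`. -/
theorem margAlphaLoss_unique_minimizer
    (α : ℝ) (hα : 1 ≤ α) (η : ℝ) (hη : η ∈ Set.Ioo (0:ℝ) 1) (hne : η ≠ 1/2) :
    (∀ f : ℝ, f ≠ α * Real.log (η / (1 - η)) →
      η * margAlphaLoss α (α * Real.log (η / (1 - η)))
        + (1 - η) * margAlphaLoss α (-(α * Real.log (η / (1 - η))))
      < η * margAlphaLoss α f + (1 - η) * margAlphaLoss α (-f)) ∧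
    Real.sign (α * Real.log (η / (1 - η))) = Real.sign (2 * η - 1) := by
  obtain ⟨hη0, hη1⟩ := hη
  have h1η : 0 < 1 - η := by linarith
  have hαpos : (0:ℝ) < α := by linarith
  set t := Real.log (η / (1 - η)) with ht
  constructor
  · obtain ⟨g, hC, hpos, hneg⟩ := key α hα η hη0 hη1
    set C : ℝ → ℝ := fun f => η * margAlphaLoss α f + (1 - η) * margAlphaLoss α (-f) with hCdef
    have hcont : ∀ s : Set ℝ, ContinuousOn C s := fun s =>
      fun f _ => (hC f).differentiableAt.continuousAt.continuousWithinAt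
    have hmono : StrictMonoOn C (Set.Ici (α * t)) := by
      apply strictMonoOn_of_deriv_pos (convex_Ici _) (hcont _)
      intro f hf
      rw [interior_Ici] at hf
      rw [(hC f).deriv]
      exact hpos f hf
    have hanti : StrictAntiOn C (Set.Iic (α * t)) := by
      apply strictAntiOn_of_deriv_neg (convex_Iic _) (hcont _)
      intro f hf
      rw [interior_Iic] at hf
      rw [(hC f).deriv]
      exact hneg f hf
    intro f hf
    rcases lt_or_gt_of_ne hf with h | h
    · exact hanti (le_of_lt h) (le_refl (α * t)) h
    · exact hmono (le_refl (α * t)) (le_of_lt h) h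
  · rcases lt_or_gt_of_ne hne with h | h
    · have htneg : t < 0 := Real.log_neg (by positivity) (by rw [div_lt_one h1η]; linarith)
      rw [Real.sign_of_neg (by nlinarith), Real.sign_of_neg (by linarith)]
    · have htpos : 0 < t := Real.log_pos (by rw [lt_div_iff₀ h1η]; linarith)
      rw [Real.sign_of_pos (by nlinarith), Real.sign_of_pos (by linarith)]
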